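/- Let (B, ⌊·,·⌋, ‖·‖) be a Banach SSD space and f a proper convex lower semicontinuous VZ function on B, i.e., (f−q) ▽ p = 0 on B, where ▽ denotes inf-convolution and p := (1/2)‖·‖² + q. Then P_q(f) is a nonempty q-positive subset of B, and for every d ∈ dom f, dist(d, P_q(f)) ≤ 5√((f−q)(d)). -/

import Mathlib

theorem stmt_16 (B : Type*) [NormedAddCommGroup B] [NormedSpace ℝ B] [CompleteSpace B]
    (hB : ∃ b : B, b ≠ 0)
    (br : B →ₗ[ℝ] B →ₗ[ℝ] ℝ) (hsym : ∀ b c, br b c = br c b)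
    (hbd : ∀ b c : B, |br b c| ≤ ‖b‖ * ‖c‖)
    (q : B → ℝ) (hq : ∀ b, q b = br b b / 2)
    (p : B → ℝ) (hp : ∀ b, p b = ‖b‖ ^ 2 / 2 + q b)
    (f : B → EReal) (hproper : ∃ b, f b ≠ ⊤) (hreal : ∀ b, f b ≠ ⊥)
    (hconv : ∀ x y : B, ∀ t : ℝ, 0 ≤ t → t ≤ 1 →
      f (t • x + (1 - t) • y) ≤ (t : EReal) * f x + ((1 - t : ℝ) : EReal) * f y)
    (hlsc : LowerSemicontinuous f)
    (hVZ : ∀ c : B, (⨅ b : B, (f b - (q b : EReal) + (p (c - b) : EReal))) = 0) :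
    {b : B | f b = (q b : EReal)}.Nonempty ∧
      (∀ b ∈ {b : B | f b = (q b : EReal)}, ∀ c ∈ {b : B | f b = (q b : EReal)},
        0 ≤ q (b - c)) ∧
      ∀ d : B, ∀ r : ℝ, f d = (r : EReal) →
        Metric.infDist d {b : B | f b = (q b : EReal)} ≤ 5 * Real.sqrt (r - q d) := by
  -- basic facts
  have hq0 : q 0 = 0 := by rw [hq]; simp
  have hp0 : p 0 = 0 := by rw [hp, hq0]; simp
  have hqabs : ∀ x : B, |q x| ≤ ‖x‖ ^ 2 / 2 := by
    intro x
    have := hbd x x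
    rw [hq, abs_div, abs_two]
    rw [div_le_div_iff₀ (by norm_num) (by norm_num)]
    nlinarith [this]
  have hpnn : ∀ x : B, 0 ≤ p x := by
    intro x
    have := (abs_le.mp (hqabs x)).1
    rw [hp]; linarith
  -- f ≥ q
  have hfq : ∀ b : B, (q b : EReal) ≤ f b := by
    intro b
    rcases eq_or_ne (f b) ⊤ with h | h
    · rw [h]; exact le_top
    · have h0 : (0 : EReal) ≤ f b - (q b : EReal) + (p (b - b) : EReal) := by
        rw [← hVZ b]; exact iInf_le _ b
      rw [sub_self, hp0] at h0
      obtain ⟨s, hs⟩ : ∃ s : ℝ, f b = (s : EReal) :=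
        ⟨(f b).toReal, (EReal.coe_toReal h (hreal b)).symm⟩
      rw [hs] at h0 ⊢
      have : (0 : ℝ) ≤ s - q b + 0 := by exact_mod_cast h0
      exact_mod_cast (by linarith : q b ≤ s)
  -- existence of approximate minimizers
  have hex : ∀ (c : B) (ε : ℝ), 0 < ε →
      ∃ (b : B) (s : ℝ), f b = (s : EReal) ∧ s - q b + p (c - b) < ε := by
    intro c ε hε
    have h0 : (⨅ b : B, (f b - (q b : EReal) + (p (c - b) : EReal))) < (ε : EReal) := by
      rw [hVZ c]; exact_mod_cast hε
    obtain ⟨b, hb⟩ := iInf_lt_iff.mp h0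
    have htop : f b ≠ ⊤ := by
      intro h
      rw [h, EReal.top_sub_coe, EReal.top_add_coe] at hb
      exact (not_top_lt hb)
    obtain ⟨s, hs⟩ : ∃ s : ℝ, f b = (s : EReal) :=
      ⟨(f b).toReal, (EReal.coe_toReal htop (hreal b)).symm⟩
    rw [hs] at hb
    refine ⟨b, s, hs, ?_⟩
    exact_mod_cast hb
  -- quadratic expansion of q at midpoints
  have expand : ∀ b c : B,
      q ((1/2 : ℝ) • b + (1 - 1/2 : ℝ) • c) = (q b + q c) / 2 - q (b - c) / 4 := by
    intro b c
    have h12 : (1 - 1/2 : ℝ) = 1/2 := by norm_num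
    rw [h12]
    simp only [hq, map_add, map_smul, map_sub, LinearMap.add_apply, LinearMap.smul_apply,
      LinearMap.sub_apply, smul_eq_mul]
    rw [hsym c b]
    ring
  -- key convexity estimate
  have hkey : ∀ (b c : B) (β γ : ℝ), f b = (β : EReal) → f c = (γ : EReal) →
      -2 * ((β - q b) + (γ - q c)) ≤ q (b - c) := by
    intro b c β γ hb hc
    have h := hconv b c (1/2) (by norm_num) (by norm_num)
    rw [hb, hc] at h
    set m := (1/2 : ℝ) • b + (1 - 1/2 : ℝ) • c with hm
    have h2 : ((q m : ℝ) : EReal) ≤ (((β + γ) / 2 : ℝ) : EReal) := by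
      refine (hfq m).trans (h.trans_eq ?_)
      norm_cast
      ring
    have h3 : q m ≤ (β + γ) / 2 := by exact_mod_cast h2
    have h4 := expand b c
    rw [← hm] at h4
    linarith
  -- continuity of q
  have hqc : Continuous q := by
    have hbr : Continuous fun b : B => br b b := by
      let F : B →L[ℝ] B →L[ℝ] ℝ := LinearMap.mkContinuous₂ br 1
        (fun x y => by rw [one_mul]; simpa using hbd x y)
      have hFe : (fun b : B => br b b) = fun b : B => F b b := rfl
      rw [hFe]
      exact F.isBoundedBilinearMap.continuous.comp (continuous_id.prodMk continuous_id)
    have : q = fun b => br b b / 2 := funext hq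
    rw [this]
    exact hbr.div_const 2
  -- main lemma
  have main : ∀ (d : B) (r : ℝ), f d = (r : EReal) →
      ∃ z : B, f z = (q z : EReal) ∧ ‖d - z‖ ≤ 5 * Real.sqrt (r - q d) := by
    intro d r hfd
    have hl0 : 0 ≤ r - q d := by
      have := hfq d
      rw [hfd] at this
      have : q d ≤ r := by exact_mod_cast this
      linarith
    rcases eq_or_lt_of_le hl0 with hl | hl
    · refine ⟨d, ?_, ?_⟩
      · rw [hfd]; exact_mod_cast (by linarith : r = q d)
      · rw [sub_self, norm_zero]; positivity
    · set l := r - q d with hldef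
      have step : ∀ (c : B) (n : ℕ), ∃ bs : B × ℝ,
          f bs.1 = (bs.2 : EReal) ∧ bs.2 - q bs.1 + p (c - bs.1) < l / 4 ^ (n+1) := by
        intro c n
        obtain ⟨b, s, h1, h2⟩ := hex c (l / 4 ^ (n+1)) (by positivity)
        exact ⟨(b, s), h1, h2⟩
      let D : ℕ → B × ℝ := fun n =>
        Nat.rec (d, r) (fun n prev => Classical.choose (step prev.1 n)) n
      have hDs : ∀ n, D (n+1) = Classical.choose (step (D n).1 n) := fun n => rfl
      have spec : ∀ n, f (D (n+1)).1 = ((D (n+1)).2 : EReal) ∧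
          (D (n+1)).2 - q (D (n+1)).1 + p ((D n).1 - (D (n+1)).1) < l / 4 ^ (n+1) := by
        intro n; rw [hDs n]; exact Classical.choose_spec (step (D n).1 n)
      have hval : ∀ n, f (D n).1 = ((D n).2 : EReal) := by
        intro n
        cases n with
        | zero => exact hfd
        | succ n => exact (spec n).1
      have hg : ∀ n, (D n).2 - q (D n).1 ≤ l / 4 ^ n := by
        intro n
        cases n with
        | zero => simp [D]; linarith
        | succ n =>
          have h2 := (spec n).2
          have hpn := hpnn ((D n).1 - (D (n+1)).1)
          linarith
      have hgn : ∀ n, 0 ≤ (D n).2 - q (D n).1 := by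
        intro n
        have := hfq (D n).1
        rw [hval n] at this
        have : q (D n).1 ≤ (D n).2 := by exact_mod_cast this
        linarith
      have hnorm : ∀ n, ‖(D n).1 - (D (n+1)).1‖ ≤ Real.sqrt (11/2 * l) * (1/2) ^ n := by
        intro n
        have h2 := (spec n).2
        have hk := hkey (D n).1 (D (n+1)).1 (D n).2 (D (n+1)).2 (hval n) (hval (n+1))
        have hpe := hp ((D n).1 - (D (n+1)).1)
        have e1 := hg n
        have e2 := hg (n+1)
        have e3 := hgn (n+1)
        have ha : l / 4 ^ (n+1) = (l / 4 ^ n) / 4 := by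
          rw [pow_succ]; ring
        have key2 : ‖(D n).1 - (D (n+1)).1‖ ^ 2 ≤ 11/2 * l * ((1/2 : ℝ) ^ n) ^ 2 := by
          have h14 : ((1/2 : ℝ) ^ n) ^ 2 = 1 / 4 ^ n := by
            rw [div_pow, one_pow, div_pow, one_pow, ← pow_mul,
              show (4:ℝ) = 2 ^ 2 by norm_num, ← pow_mul, Nat.mul_comm]
          rw [h14]
          rw [ha] at h2 e2
          have : 11/2 * l * (1 / 4 ^ n) = 11/2 * (l / 4 ^ n) := by ring
          rw [this]
          linarith
        calc ‖(D n).1 - (D (n+1)).1‖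
            = Real.sqrt (‖(D n).1 - (D (n+1)).1‖ ^ 2) := (Real.sqrt_sq (norm_nonneg _)).symm
          _ ≤ Real.sqrt (11/2 * l * ((1/2 : ℝ) ^ n) ^ 2) := Real.sqrt_le_sqrt key2
          _ = Real.sqrt (11/2 * l) * (1/2) ^ n := by
              rw [Real.sqrt_mul (by positivity), Real.sqrt_sq (by positivity)]
      have hdist : ∀ n, dist ((fun n => (D n).1) n) ((fun n => (D n).1) (n+1)) ≤
          Real.sqrt (11/2 * l) * (1/2) ^ n := by
        intro n; rw [dist_eq_norm]; exact hnorm n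
      have hcauchy : CauchySeq fun n => (D n).1 :=
        cauchySeq_of_le_geometric (1/2) _ (by norm_num) hdist
      obtain ⟨z, hz⟩ := cauchySeq_tendsto_of_complete hcauchy
      have hgeo : Filter.Tendsto (fun n : ℕ => l / 4 ^ n) Filter.atTop (nhds 0) := by
        have h4 : Filter.Tendsto (fun n : ℕ => (1/4 : ℝ) ^ n) Filter.atTop (nhds 0) :=
          tendsto_pow_atTop_nhds_zero_of_lt_one (by norm_num) (by norm_num)
        have := h4.const_mul l
        rw [mul_zero] at this
        convert this using 2 with n
        rw [div_pow, one_pow]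
        ring
      have hfz : f z = (q z : EReal) := by
        refine le_antisymm ?_ (hfq z)
        by_contra hcon
        push_neg at hcon
        obtain ⟨y, hy1, hy2⟩ := exists_between hcon
        obtain ⟨ys, rfl⟩ : ∃ ys : ℝ, y = (ys : EReal) :=
          ⟨y.toReal, (EReal.coe_toReal (ne_top_of_lt hy2) (ne_bot_of_gt hy1)).symm⟩
        have hev1 : ∀ᶠ n in Filter.atTop, (ys : EReal) < f ((fun n => (D n).1) n) :=
          hz.eventually (hlsc z ys hy2)
        have hten : Filter.Tendsto (fun n => q ((D n).1) + l / 4 ^ n) Filter.atTop (nhds (q z + 0)) :=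
          ((hqc.tendsto z).comp hz).add hgeo
        have hlt : q z + 0 < ys := by
          rw [add_zero]; exact_mod_cast hy1
        have hev2 : ∀ᶠ n in Filter.atTop, q ((D n).1) + l / 4 ^ n < ys :=
          hten.eventually_lt_const hlt
        obtain ⟨n, h1n, h2n⟩ := (hev1.and hev2).exists
        rw [hval n] at h1n
        have h1n' : ys < (D n).2 := by exact_mod_cast h1n
        have := hg n
        linarith
      refine ⟨z, hfz, ?_⟩
      have hd := dist_le_of_le_geometric_of_tendsto₀ (1/2) (Real.sqrt (11/2 * l))
        (by norm_num) hdist hz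
      have hD0 : (D 0).1 = d := rfl
      rw [hD0, dist_eq_norm] at hd
      have heq : Real.sqrt (11/2 * l) / (1 - 1/2) = 2 * Real.sqrt (11/2 * l) := by
        norm_num; ring
      rw [heq] at hd
      refine hd.trans ?_
      have h52 : Real.sqrt (11/2 : ℝ) ≤ 5/2 := by
        rw [show (5/2 : ℝ) = Real.sqrt ((5/2) ^ 2) from (Real.sqrt_sq (by norm_num)).symm]
        exact Real.sqrt_le_sqrt (by norm_num)
      rw [Real.sqrt_mul (by norm_num : (0:ℝ) ≤ 11/2) l]
      have hsl : 0 ≤ Real.sqrt l := Real.sqrt_nonneg l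
      nlinarith [Real.sqrt_nonneg (11/2 : ℝ)]
  obtain ⟨b0, hb0top⟩ := hproper
  obtain ⟨z0, hz0, _⟩ := main b0 (f b0).toReal (EReal.coe_toReal hb0top (hreal b0)).symm
  refine ⟨⟨z0, hz0⟩, ?_, ?_⟩
  · intro b hb c hc
    have := hkey b c (q b) (q c) hb hc
    linarith
  · intro d r hdr
    obtain ⟨z, hzP, hdist⟩ := main d r hdr
    have h1 : Metric.infDist d {b : B | f b = (q b : EReal)} ≤ dist d z :=
      Metric.infDist_le_dist_of_mem hzP
    rw [dist_eq_norm] at h1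
    exact h1.trans hdist
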